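/- Let B be a bounded self-adjoint operator on a Hilbert space with 0 ≤ B ≤ I, and let w ∈ H be orthogonal to the subspace {u : B u = 0}. Then lim_{n→∞} ‖(I − B)ⁿ w‖ = 0. -/

import Mathlib

open ContinuousLinearMap Filter Topology

theorem stmt13 {H : Type*} [NormedAddCommGroup H] [InnerProductSpace ℂ H] [CompleteSpace H]
    (B : H →L[ℂ] H) (hB : B.IsPositive) (hBI : ((1 : H →L[ℂ] H) - B).IsPositive)
    (w : H) (hw : ∀ u : H, B u = 0 → (inner ℂ w u : ℂ) = 0) :
    Tendsto (fun n : ℕ => ‖(((1 : H →L[ℂ] H) - B) ^ n) w‖) atTop (𝓝 0) := by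
  set T : H →L[ℂ] H := 1 - B with hTdef
  have hT0 : (0 : H →L[ℂ] H) ≤ T := (nonneg_iff_isPositive T).mpr hBI
  have hT1 : T ≤ 1 := (le_def T 1).mpr (by simpa [hTdef] using hB)
  have hTsa : IsSelfAdjoint T := hBI.isSelfAdjoint
  have hsymm : ∀ n : ℕ, ∀ x y : H, (inner ℂ ((T ^ n) x) y : ℂ) = inner ℂ x ((T ^ n) y) :=
    fun n => isSelfAdjoint_iff_isSymmetric.mp (hTsa.pow n)
  have hinner : ∀ n m : ℕ, (inner ℂ ((T ^ n) w) ((T ^ m) w) : ℂ) = inner ℂ w ((T ^ (n + m)) w) := by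
    intro n m
    rw [hsymm n w, pow_add, ContinuousLinearMap.mul_apply]
  set a : ℕ → ℝ := fun n => RCLike.re (inner ℂ w ((T ^ n) w) : ℂ) with hadef
  have hpos : ∀ n, 0 ≤ a n := by
    intro n
    exact (Complex.nonneg_iff.mp (((nonneg_iff_isPositive _).mp (CStarAlgebra.pow_nonneg hT0 n)).inner_nonneg_right w)).1
  have hmono : Antitone a := by
    intro n m hnm
    have h : T ^ m ≤ T ^ n := CStarAlgebra.pow_antitone hT0 hT1 hnm
    have h2 := ((le_def _ _).mp h).inner_nonneg_right w
    simp only [sub_apply, inner_sub_right, map_sub] at h2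
    open ComplexOrder in simpa [hadef] using (Complex.le_def.mp (sub_nonneg.mp h2)).1
  have hnormsq : ∀ n : ℕ, ‖(T ^ n) w‖ ^ 2 = a (n + n) := by
    intro n
    show ‖(T ^ n) w‖ ^ 2 = RCLike.re (inner ℂ w ((T ^ (n + n)) w) : ℂ)
    rw [← hinner n n]
    exact (inner_self_eq_norm_sq (𝕜 := ℂ) ((T ^ n) w)).symm
  have hbdd : BddBelow (Set.range a) := ⟨0, by rintro _ ⟨n, rfl⟩; exact hpos n⟩
  set L : ℝ := ⨅ n, a n with hLdef
  have hL : Tendsto a atTop (𝓝 L) := tendsto_atTop_ciInf hmono hbdd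
  have hLle : ∀ k, L ≤ a k := fun k => ciInf_le hbdd k
  -- the sequence (T^n w) is Cauchy
  have hcauchy : CauchySeq (fun n : ℕ => (T ^ n) w) := by
    rw [Metric.cauchySeq_iff']
    intro ε hε
    obtain ⟨N, hN⟩ := (Metric.tendsto_atTop.mp hL) (ε ^ 2 / 2) (by positivity)
    refine ⟨N, fun n hn => ?_⟩
    have e1 : RCLike.re (inner ℂ ((T ^ n) w) ((T ^ N) w) : ℂ) = a (n + N) := by
      show _ = RCLike.re (inner ℂ w ((T ^ (n + N)) w) : ℂ)
      rw [hinner]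
    have hkey : dist ((T ^ n) w) ((T ^ N) w) ^ 2 = a (n + n) - 2 * a (n + N) + a (N + N) := by
      rw [dist_eq_norm, norm_sub_sq (𝕜 := ℂ), hnormsq, hnormsq, e1]
    have h2n : a (n + n) ≤ a (n + N) := hmono (by omega)
    have hlow : L ≤ a (n + N) := hLle _
    have hNN := hN (N + N) (by omega)
    rw [Real.dist_eq, abs_lt] at hNN
    have h1 : dist ((T ^ n) w) ((T ^ N) w) ^ 2 < ε ^ 2 := by nlinarith
    exact lt_of_pow_lt_pow_left₀ 2 hε.le h1
  obtain ⟨v, hv⟩ := cauchySeq_tendsto_of_complete hcauchy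
  -- T v = v
  have hTv : T v = v := by
    have h1 : Tendsto (fun n : ℕ => T ((T ^ n) w)) atTop (𝓝 (T v)) :=
      (T.continuous.tendsto v).comp hv
    have h2 : (fun n : ℕ => T ((T ^ n) w)) = fun n : ℕ => (T ^ (n + 1)) w := by
      funext n; rw [pow_succ', ContinuousLinearMap.mul_apply]
    have h3 : Tendsto (fun n : ℕ => (T ^ (n + 1)) w) atTop (𝓝 v) :=
      hv.comp (tendsto_add_atTop_nat 1)
    exact tendsto_nhds_unique (h2 ▸ h1) h3
  have hBv : B v = 0 := by
    have : T v = v - B v := by simp [hTdef, sub_apply]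
    rw [hTv] at this
    exact sub_eq_self.mp this.symm
  have hwv : (inner ℂ w v : ℂ) = 0 := hw v hBv
  have hTnv : ∀ n : ℕ, (T ^ n) v = v := by
    intro n
    induction n with
    | zero => simp
    | succ k ih => rw [pow_succ, ContinuousLinearMap.mul_apply, hTv, ih]
  have hv0 : v = 0 := by
    have h4 : ∀ n : ℕ, (inner ℂ ((T ^ n) w) v : ℂ) = 0 := fun n => by
      rw [hsymm n w v, hTnv n, hwv]
    have h5 : Tendsto (fun n : ℕ => (inner ℂ ((T ^ n) w) v : ℂ)) atTop (𝓝 (inner ℂ v v)) :=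
      hv.inner tendsto_const_nhds
    have h6 : (inner ℂ v v : ℂ) = 0 := by
      have : Tendsto (fun _ : ℕ => (0 : ℂ)) atTop (𝓝 (inner ℂ v v)) := by
        simpa only [h4] using h5
      exact (tendsto_nhds_unique this tendsto_const_nhds)
    exact inner_self_eq_zero.mp h6
  have := hv.norm
  rw [hv0, norm_zero] at this
  exact this
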